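/- If S, T ∈ B(X) are nilpotent equivalent (there exists k with C(S,T)^k(I) = C(T,S)^k(I) = 0), then T has Bishop's property (β) at λ₀ if and only if S has Bishop's property (β) at λ₀. -/

import Mathlib

open Filter Metric Polynomial

noncomputable section

variable {X : Type*} [NormedAddCommGroup X] [NormedSpace ℂ X]

/-- The commutator map `C(R,S)(A) = RA - AS`. -/
def commMap (R S : X →L[ℂ] X) : (X →L[ℂ] X) → (X →L[ℂ] X) := fun A => R ∘L A - A ∘L S

lemma expand (S T : X →L[ℂ] X) (k : ℕ) (z : ℂ) :
    (T - z • 1) ^ k = ∑ j ∈ Finset.range (k + 1),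
      (k.choose j) • ((commMap T S)^[j] 1 * (S - z • 1) ^ (k - j)) := by
  set q : X →L[ℂ] X := T - z • 1 with hq
  set p : X →L[ℂ] X := S - z • 1 with hp
  set L := LinearMap.mulLeft ℂ q with hL
  set R := LinearMap.mulRight ℂ p with hR
  set D := L - R with hDdef
  have hD : ⇑D = commMap T S := by
    funext A
    show q * A - A * p = T * A - A * S
    rw [hq, hp, sub_mul, mul_sub, smul_mul_assoc, mul_smul_comm, one_mul, mul_one]
    abel
  have hcomm : Commute D R := by
    have h1 : Commute L R := LinearMap.commute_mulLeft_right q p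
    exact h1.sub_left (Commute.refl R)
  have hqk : q ^ k = (L ^ k) 1 := by
    rw [hL, LinearMap.pow_mulLeft, LinearMap.mulLeft_apply, mul_one]
  have hLDR : L = D + R := by rw [hDdef, sub_add_cancel]
  rw [hqk, hLDR, hcomm.add_pow]
  rw [LinearMap.sum_apply]
  refine Finset.sum_congr rfl fun j hj => ?_
  have hsw : D ^ j * R ^ (k - j) = R ^ (k - j) * D ^ j := (hcomm.pow_pow j (k - j)).eq
  rw [hsw]
  rw [Module.End.mul_apply, Module.End.mul_apply]
  have hcast : ((k.choose j : ℕ) : Module.End ℂ (X →L[ℂ] X)) 1 = (k.choose j : ℕ) • 1 := by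
    simp [Module.End.natCast_apply]
  rw [hcast, map_nsmul, map_nsmul]
  congr 1
  rw [hR, LinearMap.pow_mulRight, LinearMap.mulRight_apply]
  congr 1
  rw [Module.End.pow_apply, hD]

lemma pointwise (S T : X →L[ℂ] X) (k : ℕ) (hk : (commMap T S)^[k + 1] 1 = 0) (z : ℂ) (x : X) :
    ((T - z • 1) ^ (k + 1)) x =
      (∑ j ∈ Finset.range (k + 1),
        (k + 1).choose j • ((commMap T S)^[j] 1 ∘L (S - z • 1) ^ (k - j))) ((S - z • 1) x) := by
  rw [expand S T (k + 1) z]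
  rw [Finset.sum_range_succ, hk, zero_mul, smul_zero, add_zero]
  rw [ContinuousLinearMap.sum_apply, ContinuousLinearMap.sum_apply]
  refine Finset.sum_congr rfl fun j hj => ?_
  have hj' : j ≤ k := Nat.lt_succ_iff.mp (Finset.mem_range.mp hj)
  have hkj : k + 1 - j = (k - j) + 1 := by omega
  rw [ContinuousLinearMap.smul_apply, ContinuousLinearMap.smul_apply]
  congr 1
  rw [hkj, pow_succ, ContinuousLinearMap.mul_apply, ContinuousLinearMap.mul_apply,
    ContinuousLinearMap.comp_apply]

lemma pow_norm_le (S : X →L[ℂ] X) (z : ℂ) (r : ℝ) (hz : ‖z‖ ≤ r) (m : ℕ) :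
    ‖(S - z • 1) ^ m‖ ≤ (‖S‖ + r) ^ m := by
  have hp : ‖S - z • (1 : X →L[ℂ] X)‖ ≤ ‖S‖ + r := by
    refine (norm_sub_le _ _).trans ?_
    gcongr
    refine (norm_smul_le z (1 : X →L[ℂ] X)).trans ?_
    calc ‖z‖ * ‖(1 : X →L[ℂ] X)‖ ≤ ‖z‖ * 1 := by
          gcongr; exact ContinuousLinearMap.norm_id_le
      _ = ‖z‖ := mul_one _
      _ ≤ r := hz
  induction m with
  | zero => rw [pow_zero, pow_zero]; exact ContinuousLinearMap.norm_id_le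
  | succ m ih =>
    rw [pow_succ, pow_succ]
    refine (norm_mul_le _ _).trans ?_
    have h0 : (0:ℝ) ≤ ‖S‖ + r := le_trans (norm_nonneg _) hp
    gcongr

lemma key_bound (S T : X →L[ℂ] X) (k : ℕ) (hk : (commMap T S)^[k + 1] 1 = 0)
    (r : ℝ) (hr : 0 ≤ r) :
    ∃ C : ℝ, 0 ≤ C ∧ ∀ z : ℂ, ‖z‖ ≤ r → ∀ x : X,
      ‖((T - z • 1) ^ (k + 1)) x‖ ≤ C * ‖S x - z • x‖ := by
  refine ⟨∑ j ∈ Finset.range (k + 1),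
      ((k + 1).choose j : ℝ) * (‖(commMap T S)^[j] 1‖ * (‖S‖ + r) ^ (k - j)), ?_, ?_⟩
  · refine Finset.sum_nonneg fun j _ => ?_
    have h0 : (0:ℝ) ≤ ‖S‖ + r := by positivity
    positivity
  · intro z hz x
    have hx : (S - z • 1) x = S x - z • x := by
      simp [ContinuousLinearMap.sub_apply, ContinuousLinearMap.smul_apply,
        ContinuousLinearMap.one_apply]
    rw [pointwise S T k hk z x, ← hx]
    refine (ContinuousLinearMap.le_opNorm _ _).trans ?_
    gcongr
    refine (norm_sum_le _ _).trans ?_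
    refine Finset.sum_le_sum fun j hj => ?_
    refine (norm_nsmul_le).trans ?_
    refine le_trans (mul_le_mul_of_nonneg_left
      (ContinuousLinearMap.opNorm_comp_le _ _) (by positivity)) ?_
    have hP := pow_norm_le S z r hz (k - j)
    have h2 := mul_le_mul_of_nonneg_left hP (norm_nonneg ((commMap T S)^[j] 1))
    exact mul_le_mul_of_nonneg_left h2 (by positivity)

lemma tuo_of_bound {K : Set ℂ} {g h : ℕ → ℂ → X} {C : ℝ} (hC : 0 ≤ C)
    (hb : ∀ n, ∀ z ∈ K, ‖h n z‖ ≤ C * ‖g n z‖)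
    (hg : TendstoUniformlyOn g 0 atTop K) : TendstoUniformlyOn h 0 atTop K := by
  rw [Metric.tendstoUniformlyOn_iff] at hg ⊢
  intro ε hε
  have hC1 : (0:ℝ) < C + 1 := by positivity
  filter_upwards [hg (ε / (C + 1)) (by positivity)] with n hn z hz
  have h1 := hn z hz
  rw [Pi.zero_apply, dist_zero_left] at h1 ⊢
  calc ‖h n z‖ ≤ C * ‖g n z‖ := hb n z hz
    _ ≤ C * (ε / (C + 1)) := mul_le_mul_of_nonneg_left h1.le hC
    _ < (C + 1) * (ε / (C + 1)) := by
        have h2 : (0:ℝ) < ε / (C + 1) := by positivity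
        nlinarith
    _ = ε := by field_simp

lemma analytic_step {U : Set ℂ} {f : ℂ → X} (T : X →L[ℂ] X) (hf : AnalyticOnNhd ℂ f U) :
    AnalyticOnNhd ℂ (fun z => T (f z) - z • f z) U :=
  (T.comp_analyticOnNhd hf).sub ((analyticOnNhd_id).smul hf)

lemma descent (T : X →L[ℂ] X) {l0 : ℂ} {v : ℝ}
    (hβ : ∀ U : Set ℂ, IsOpen U → U ⊆ ball l0 v →
      ∀ f : ℕ → ℂ → X, (∀ n, AnalyticOnNhd ℂ (f n) U) →
        (∀ K ⊆ U, IsCompact K →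
          TendstoUniformlyOn (fun n z => T (f n z) - z • f n z) 0 atTop K) →
        ∀ K ⊆ U, IsCompact K → TendstoUniformlyOn (fun n z => f n z) 0 atTop K)
    (m : ℕ) :
    ∀ U : Set ℂ, IsOpen U → U ⊆ ball l0 v →
      ∀ f : ℕ → ℂ → X, (∀ n, AnalyticOnNhd ℂ (f n) U) →
        (∀ K ⊆ U, IsCompact K →
          TendstoUniformlyOn (fun n z => ((T - z • 1) ^ m) (f n z)) 0 atTop K) →
        ∀ K ⊆ U, IsCompact K → TendstoUniformlyOn (fun n z => f n z) 0 atTop K := by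
  induction m with
  | zero =>
    intro U hU hUv f hf hconv K hKU hKc
    simpa only [pow_zero, ContinuousLinearMap.one_apply] using hconv K hKU hKc
  | succ m ih =>
    intro U hU hUv f hf hconv K hKU hKc
    set g : ℕ → ℂ → X := fun n z => T (f n z) - z • f n z with hg
    have hgan : ∀ n, AnalyticOnNhd ℂ (g n) U := fun n => analytic_step T (hf n)
    have hgeq : ∀ n z, g n z = (T - z • 1) (f n z) := by
      intro n z
      simp [hg, ContinuousLinearMap.sub_apply, ContinuousLinearMap.smul_apply,
        ContinuousLinearMap.one_apply]
    have hgconv : ∀ K' ⊆ U, IsCompact K' →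
        TendstoUniformlyOn (fun n z => ((T - z • 1) ^ m) (g n z)) 0 atTop K' := by
      intro K' hK'U hK'c
      have heq : (fun n (z : ℂ) => ((T - z • 1) ^ m) (g n z)) =
          fun n z => ((T - z • 1) ^ (m + 1)) (f n z) := by
        funext n z
        rw [hgeq n z, pow_succ, ContinuousLinearMap.mul_apply]
      rw [heq]
      exact hconv K' hK'U hK'c
    have hg0 : ∀ K' ⊆ U, IsCompact K' → TendstoUniformlyOn (fun n z => g n z) 0 atTop K' :=
      fun K' hK'U hK'c => ih U hU hUv g hgan hgconv K' hK'U hK'c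
    exact hβ U hU hUv f hf hg0 K hKU hKc

/-- Bishop's property (β) at a point `l0`. -/
def BishopBetaAt (T : X →L[ℂ] X) (l0 : ℂ) : Prop :=
  ∃ v > (0 : ℝ), ∀ U : Set ℂ, IsOpen U → U ⊆ ball l0 v →
    ∀ f : ℕ → ℂ → X, (∀ n, AnalyticOnNhd ℂ (f n) U) →
      (∀ K ⊆ U, IsCompact K →
        TendstoUniformlyOn (fun n z => T (f n z) - z • f n z) 0 atTop K) →
      ∀ K ⊆ U, IsCompact K → TendstoUniformlyOn (fun n z => f n z) 0 atTop K

lemma key (S T : X →L[ℂ] X) (l0 : ℂ) (k : ℕ) (hk : (commMap T S)^[k] 1 = 0)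
    (hT : BishopBetaAt T l0) : BishopBetaAt S l0 := by
  cases k with
  | zero =>
    have hx : ∀ x : X, x = 0 := by
      intro x
      have h1 : (1 : X →L[ℂ] X) = 0 := hk
      calc x = (1 : X →L[ℂ] X) x := rfl
        _ = (0 : X →L[ℂ] X) x := by rw [h1]
        _ = 0 := rfl
    refine ⟨1, one_pos, fun U hU hUv f hf hconv K hKU hKc => ?_⟩
    rw [Metric.tendstoUniformlyOn_iff]
    intro ε hε
    filter_upwards with n z hz
    rw [Pi.zero_apply, hx (f n z), dist_self]
    exact hε
  | succ k =>
    obtain ⟨v, hv, hβ⟩ := hT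
    refine ⟨v, hv, fun U hU hUv f hf hconv K hKU hKc => ?_⟩
    obtain ⟨C, hC0, hC⟩ := key_bound S T k hk (‖l0‖ + v) (by positivity)
    have hpow : ∀ K' ⊆ U, IsCompact K' →
        TendstoUniformlyOn (fun n z => ((T - z • 1) ^ (k + 1)) (f n z)) 0 atTop K' := by
      intro K' hK'U hK'c
      refine tuo_of_bound hC0 ?_ (hconv K' hK'U hK'c)
      intro n z hz
      have hzb : ‖z‖ ≤ ‖l0‖ + v := by
        have hm : z ∈ ball l0 v := hUv (hK'U hz)
        rw [mem_ball, dist_eq_norm] at hm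
        calc ‖z‖ = ‖z - l0 + l0‖ := by ring_nf
          _ ≤ ‖z - l0‖ + ‖l0‖ := norm_add_le _ _
          _ ≤ v + ‖l0‖ := by linarith [hm.le]
          _ = ‖l0‖ + v := by ring
      exact hC z hzb (f n z)
    exact descent T hβ (k + 1) U hU hUv f hf hpow K hKU hKc

theorem stmt6 [CompleteSpace X] (S T : X →L[ℂ] X) (l0 : ℂ)
    (hnil : ∃ k : ℕ, (commMap S T)^[k] 1 = 0 ∧ (commMap T S)^[k] 1 = 0) :
    BishopBetaAt T l0 ↔ BishopBetaAt S l0 := by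
  obtain ⟨k, h1, h2⟩ := hnil
  exact ⟨fun hT => key S T l0 k h2 hT, fun hS => key T S l0 k h1 hS⟩
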